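/- For every integer n ≥ 1: (i) ∑_{j=1}^{n} H_{j,1}^2/(j+1) = (1/3)H_{n,1}^3 − ∑_{j=1}^{n} H_{j,1}/j^2 + (2/3)H_{n,3} + H_{n,1}^2/(n+1); and (ii) for every integer m ≥ 2, ∑_{j=1}^{n} H_{j,1}^2/(j+m) = ∑_{j=1}^{n} H_{j,1}^2/(j+m−1) + (2/(m−1)) ∑_{j=1}^{n} H_{j,1}/(j+m−1) − H_{n+1,1}^2/(m−1) + 1/(m(m−1)^2) − H_{m,1}/(m−1)^2 + (1/(m−1)^2) ∑_{j=n+2}^{n+m} 1/j + H_{n+1,1}^2/(n+m) + 2H_{n+1,1}/((m−1)(n+m)). -/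
import Mathlib


open Finset Filter Real Topology

/-- Generalized harmonic number `H (n, m) = ∑_{i=1}^{n} 1/i^m` as a real number. -/
noncomputable def H (n m : ℕ) : ℝ := ∑ i ∈ Finset.Icc 1 n, (1 : ℝ) / (i : ℝ) ^ m

/-- Apéry's constant `ζ(3) = ∑_{k=1}^{∞} 1/k³`. -/
noncomputable def zeta3 : ℝ := ∑' k : ℕ, 1 / ((k : ℝ) + 1) ^ 3

lemma H_succ (n m : ℕ) : H (n + 1) m = H n m + 1 / ((n : ℝ) + 1) ^ m := by
  unfold H
  rw [Finset.sum_Icc_succ_top (by omega)]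
  push_cast
  ring

lemma H_zero (m : ℕ) : H 0 m = 0 := by simp [H]

lemma sum_Icc_succ_bot {a b : ℕ} (hab : a ≤ b) (f : ℕ → ℝ) :
    ∑ j ∈ Finset.Icc a b, f j = f a + ∑ j ∈ Finset.Icc (a + 1) b, f j := by
  rw [Finset.Icc_add_one_left_eq_Ioc, ← Finset.Ioc_insert_left hab, Finset.sum_insert (by simp)]

lemma part1 (n : ℕ) :
    ∑ j ∈ Finset.Icc 1 n, (H j 1) ^ 2 / ((j : ℝ) + 1) =
      (1 / 3) * (H n 1) ^ 3 - (∑ j ∈ Finset.Icc 1 n, H j 1 / (j : ℝ) ^ 2)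
        + (2 / 3) * H n 3 + (H n 1) ^ 2 / ((n : ℝ) + 1) := by
  induction n with
  | zero => simp [H_zero]
  | succ n ih =>
    rw [Finset.sum_Icc_succ_top (by omega), Finset.sum_Icc_succ_top (by omega), ih,
      H_succ n 1, H_succ n 3]
    have h1 : ((n : ℝ) + 1) ≠ 0 := by positivity
    have h2 : ((n : ℝ) + 1 + 1) ≠ 0 := by positivity
    push_cast
    field_simp
    ring

lemma key (u v K : ℝ) (hu : u ≠ 0) (hv : v ≠ 0) (huv : v - u ≠ 0) :
    K ^ 2 / v =
      -((K + 1 / u) ^ 2) / (v - u) + K ^ 2 / (v - u)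
        + (1 / (v - u) ^ 2) * (1 / v - 1 / u)
        + (K + 1 / u) ^ 2 / v + 2 * (K + 1 / u) / ((v - u) * v) := by
  field_simp
  ring

lemma part2 (m : ℕ) (hm : 2 ≤ m) (n : ℕ) :
    ∑ j ∈ Finset.Icc 1 n, (H j 1) ^ 2 / ((j : ℝ) + m) =
      (∑ j ∈ Finset.Icc 1 n, (H j 1) ^ 2 / ((j : ℝ) + m - 1))
        + (2 / ((m : ℝ) - 1)) * ∑ j ∈ Finset.Icc 1 n, H j 1 / ((j : ℝ) + m - 1)
        - (H (n + 1) 1) ^ 2 / ((m : ℝ) - 1)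
        + 1 / ((m : ℝ) * ((m : ℝ) - 1) ^ 2)
        - H m 1 / ((m : ℝ) - 1) ^ 2
        + (1 / ((m : ℝ) - 1) ^ 2) * ∑ j ∈ Finset.Icc (n + 2) (n + m), (1 : ℝ) / (j : ℝ)
        + (H (n + 1) 1) ^ 2 / ((n : ℝ) + m)
        + 2 * H (n + 1) 1 / (((m : ℝ) - 1) * ((n : ℝ) + m)) := by
  have hm1 : (1 : ℝ) ≤ (m : ℝ) := by exact_mod_cast hm.trans' (by norm_num)
  have hc : ((m : ℝ) - 1) ≠ 0 := by
    have : (2 : ℝ) ≤ (m : ℝ) := by exact_mod_cast hm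
    linarith
  have hmne : ((m : ℝ)) ≠ 0 := by
    have : (2 : ℝ) ≤ (m : ℝ) := by exact_mod_cast hm
    linarith
  induction n with
  | zero =>
    -- sums over Icc 1 0 are empty; sum over Icc 2 m = H m 1 - 1
    have hsum : ∑ j ∈ Finset.Icc 2 m, (1 : ℝ) / (j : ℝ) = H m 1 - 1 := by
      have := sum_Icc_succ_bot (a := 1) (b := m) (by omega)
        (fun j => (1 : ℝ) / (j : ℝ))
      unfold H
      simp only [pow_one] at *
      rw [this]
      push_cast
      ring
    simp only [Nat.zero_add, Finset.Icc_self, Nat.cast_zero]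
    norm_num [H_succ, H_zero]
    have hsum' : ∑ j ∈ Finset.Icc 2 m, ((j : ℝ))⁻¹ = H m 1 - 1 := by
      simpa [one_div] using hsum
    rw [hsum']
    field_simp
    ring
  | succ n ih =>
    have hnm : ((n : ℝ) + m) ≠ 0 := by positivity
    have hnm1 : ((n : ℝ) + 1 + m) ≠ 0 := by positivity
    have hn2 : ((n : ℝ) + 2) ≠ 0 := by positivity
    -- shift the tail sum
    have htail : ∑ j ∈ Finset.Icc (n + 1 + 2) (n + 1 + m), (1 : ℝ) / (j : ℝ)
        = (∑ j ∈ Finset.Icc (n + 2) (n + m), (1 : ℝ) / (j : ℝ))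
          - 1 / ((n : ℝ) + 2) + 1 / ((n : ℝ) + m + 1) := by
      have e1 : ∑ j ∈ Finset.Icc (n + 2) (n + m + 1), (1 : ℝ) / (j : ℝ)
          = (∑ j ∈ Finset.Icc (n + 2) (n + m), (1 : ℝ) / (j : ℝ)) + 1 / ((n : ℝ) + m + 1) := by
        rw [Finset.sum_Icc_succ_top (by omega)]
        push_cast; ring_nf
      have e2 : ∑ j ∈ Finset.Icc (n + 2) (n + m + 1), (1 : ℝ) / (j : ℝ)
          = 1 / ((n : ℝ) + 2) + ∑ j ∈ Finset.Icc (n + 3) (n + m + 1), (1 : ℝ) / (j : ℝ) := by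
        rw [sum_Icc_succ_bot (by omega)]
        norm_num
      have e3 : n + 1 + 2 = n + 3 := by omega
      have e4 : n + 1 + m = n + m + 1 := by omega
      rw [e3, e4]
      linarith [e1, e2]
    rw [Finset.sum_Icc_succ_top (by omega : 1 ≤ n + 1),
      Finset.sum_Icc_succ_top (by omega : 1 ≤ n + 1),
      Finset.sum_Icc_succ_top (by omega : 1 ≤ n + 1), ih, htail,
      H_succ (n + 1) 1]
    have hb : ((n : ℝ) + 1 + 1) ≠ 0 := by positivity
    set K := H (n + 1) 1 with hK
    push_cast
    have e1 : ((n : ℝ) + 1 + 1) = (n : ℝ) + 2 := by ring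
    have e2 : ((n : ℝ) + 1 + (m : ℝ) - 1) = (n : ℝ) + (m : ℝ) := by ring
    have e3 : ((n : ℝ) + (m : ℝ) + 1) = (n : ℝ) + 1 + (m : ℝ) := by ring
    rw [e1, e2, e3]
    have hc2 : ((n : ℝ) + 1 + (m : ℝ)) - ((n : ℝ) + 2) = (m : ℝ) - 1 := by ring
    have huv : ((n : ℝ) + 1 + (m : ℝ)) - ((n : ℝ) + 2) ≠ 0 := by rw [hc2]; exact hc
    have k := key ((n : ℝ) + 2) ((n : ℝ) + 1 + (m : ℝ)) K hn2 hnm1 huv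
    rw [hc2] at k
    have ht : 1 / (((m : ℝ) - 1) * ((n : ℝ) + (m : ℝ)))
        = 1 / ((m : ℝ) - 1) * (1 / ((n : ℝ) + (m : ℝ))) := by
      rw [one_div, one_div, one_div, mul_inv]
    linear_combination k + 2 * K * ht

theorem sum_H1_sq_div_shift :
    (∀ n : ℕ, 1 ≤ n →
      ∑ j ∈ Finset.Icc 1 n, (H j 1) ^ 2 / ((j : ℝ) + 1) =
        (1 / 3) * (H n 1) ^ 3 - (∑ j ∈ Finset.Icc 1 n, H j 1 / (j : ℝ) ^ 2)
          + (2 / 3) * H n 3 + (H n 1) ^ 2 / ((n : ℝ) + 1)) ∧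
    (∀ n : ℕ, 1 ≤ n → ∀ m : ℕ, 2 ≤ m →
      ∑ j ∈ Finset.Icc 1 n, (H j 1) ^ 2 / ((j : ℝ) + m) =
        (∑ j ∈ Finset.Icc 1 n, (H j 1) ^ 2 / ((j : ℝ) + m - 1))
          + (2 / ((m : ℝ) - 1)) * ∑ j ∈ Finset.Icc 1 n, H j 1 / ((j : ℝ) + m - 1)
          - (H (n + 1) 1) ^ 2 / ((m : ℝ) - 1)
          + 1 / ((m : ℝ) * ((m : ℝ) - 1) ^ 2)
          - H m 1 / ((m : ℝ) - 1) ^ 2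
          + (1 / ((m : ℝ) - 1) ^ 2) * ∑ j ∈ Finset.Icc (n + 2) (n + m), (1 : ℝ) / (j : ℝ)
          + (H (n + 1) 1) ^ 2 / ((n : ℝ) + m)
          + 2 * H (n + 1) 1 / (((m : ℝ) - 1) * ((n : ℝ) + m))) := by
  exact ⟨fun n _ => part1 n, fun n _ m hm => part2 m hm n⟩
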